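/- Let a ∈ C³[0,R] satisfy a(0)=0 and a'>0 on (0,R). If λ ≤ μ* := ((n-2)/4)·inf_{0<x<R}[(n-1)a''/a + a'''/a'], then problem -u'' - (n-1)(a'/a)u' = λu + |u|^{q-1}u, u'(0)=u(R)=0, q=(n+2)/(n-2), has no nontrivial C² solution. -/

import Mathlib

open Set Filter Real Topology

set_option maxHeartbeats 1000000 in
theorem stmt_9 (R : ℝ) (hR : 0 < R) (n : ℕ) (hn : 2 < n)
    (q : ℝ) (hq : q = ((n : ℝ) + 2) / ((n : ℝ) - 2))
    (a : ℝ → ℝ) (ha : ContDiffOn ℝ 3 a (Set.Icc 0 R))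
    (ha0 : a 0 = 0)
    (ha'pos : ∀ x ∈ Set.Ioo (0:ℝ) R, 0 < deriv a x)
    (mu : ℝ)
    (hmu : IsGLB {y : ℝ | ∃ x ∈ Set.Ioo (0:ℝ) R,
      y = ((n : ℝ) - 1) * deriv (deriv a) x / a x +
        deriv (deriv (deriv a)) x / deriv a x} mu)
    (lam : ℝ) (hlam : lam ≤ ((n : ℝ) - 2) / 4 * mu) :
    ¬ ∃ u : ℝ → ℝ, ContDiffOn ℝ 2 u (Set.Icc 0 R) ∧
      deriv u 0 = 0 ∧ u R = 0 ∧
      (∀ x ∈ Set.Ioo (0:ℝ) R,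
        -(deriv (deriv u) x) - ((n : ℝ) - 1) * (deriv a x / a x) * deriv u x =
          lam * u x + |u x| ^ (q - 1) * u x) ∧
      (∃ x ∈ Set.Icc (0:ℝ) R, u x ≠ 0) := by
  rintro ⟨u, hu, hu'0, huR, heq, x₀, hx₀, hux₀⟩
  subst hq
  obtain ⟨m, rfl⟩ : ∃ m : ℕ, n = m + 3 := ⟨n - 3, by omega⟩
  set q : ℝ := ((↑(m + 3) : ℝ) + 2) / ((↑(m + 3) : ℝ) - 2) with hqdef
  have hm1pos : (0:ℝ) < (m:ℝ) + 1 := by positivity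
  have hq1 : 1 < q := by
    rw [hqdef]; push_cast
    rw [show ((m:ℝ) + 3 - 2) = (m:ℝ) + 1 by ring]
    rw [lt_div_iff₀ hm1pos]; linarith
  have hq1' : (0:ℝ) < q + 1 := by linarith
  have hUD : UniqueDiffOn ℝ (Set.Icc (0:ℝ) R) := uniqueDiffOn_Icc hR
  set a1 := derivWithin a (Set.Icc (0:ℝ) R) with ha1def
  set a2 := derivWithin a1 (Set.Icc (0:ℝ) R) with ha2def
  set a3 := derivWithin a2 (Set.Icc (0:ℝ) R) with ha3def
  set u1 := derivWithin u (Set.Icc (0:ℝ) R) with hu1def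
  set u2 := derivWithin u1 (Set.Icc (0:ℝ) R) with hu2def
  have ha1' : ContDiffOn ℝ 2 a1 (Set.Icc (0:ℝ) R) := ha.derivWithin hUD (by norm_num)
  have ha2' : ContDiffOn ℝ 1 a2 (Set.Icc (0:ℝ) R) := ha1'.derivWithin hUD (by norm_num)
  have hu1' : ContDiffOn ℝ 1 u1 (Set.Icc (0:ℝ) R) := hu.derivWithin hUD (by norm_num)
  have hmemD : ∀ x ∈ Set.Ioo (0:ℝ) R, Set.Icc (0:ℝ) R ∈ 𝓝 x :=
    fun x hx => Icc_mem_nhds hx.1 hx.2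
  have hxD : ∀ x ∈ Set.Ioo (0:ℝ) R, x ∈ Set.Icc (0:ℝ) R := fun x hx => Ioo_subset_Icc_self hx
  have hda : ∀ x ∈ Set.Ioo (0:ℝ) R, HasDerivAt a (a1 x) x := fun x hx =>
    ((ha.differentiableOn (by norm_num) x (hxD x hx)).hasDerivWithinAt).hasDerivAt (hmemD x hx)
  have hda1 : ∀ x ∈ Set.Ioo (0:ℝ) R, HasDerivAt a1 (a2 x) x := fun x hx =>
    ((ha1'.differentiableOn (by norm_num) x (hxD x hx)).hasDerivWithinAt).hasDerivAt (hmemD x hx)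
  have hda2 : ∀ x ∈ Set.Ioo (0:ℝ) R, HasDerivAt a2 (a3 x) x := fun x hx =>
    ((ha2'.differentiableOn (by norm_num) x (hxD x hx)).hasDerivWithinAt).hasDerivAt (hmemD x hx)
  have hdu : ∀ x ∈ Set.Ioo (0:ℝ) R, HasDerivAt u (u1 x) x := fun x hx =>
    ((hu.differentiableOn (by norm_num) x (hxD x hx)).hasDerivWithinAt).hasDerivAt (hmemD x hx)
  have hdu1 : ∀ x ∈ Set.Ioo (0:ℝ) R, HasDerivAt u1 (u2 x) x := fun x hx =>
    ((hu1'.differentiableOn (by norm_num) x (hxD x hx)).hasDerivWithinAt).hasDerivAt (hmemD x hx)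
  have hderiv_a : ∀ x ∈ Set.Ioo (0:ℝ) R, deriv a x = a1 x := fun x hx => (hda x hx).deriv
  have hderiv_u : ∀ x ∈ Set.Ioo (0:ℝ) R, deriv u x = u1 x := fun x hx => (hdu x hx).deriv
  have hd2a : ∀ x ∈ Set.Ioo (0:ℝ) R, deriv (deriv a) x = a2 x := by
    intro x hx
    have h1 : deriv a =ᶠ[𝓝 x] a1 :=
      Filter.eventuallyEq_of_mem (isOpen_Ioo.mem_nhds hx) hderiv_a
    rw [h1.deriv_eq, (hda1 x hx).deriv]
  have hd3a : ∀ x ∈ Set.Ioo (0:ℝ) R, deriv (deriv (deriv a)) x = a3 x := by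
    intro x hx
    have h1 : deriv (deriv a) =ᶠ[𝓝 x] a2 :=
      Filter.eventuallyEq_of_mem (isOpen_Ioo.mem_nhds hx) hd2a
    rw [h1.deriv_eq, (hda2 x hx).deriv]
  have hd2u : ∀ x ∈ Set.Ioo (0:ℝ) R, deriv (deriv u) x = u2 x := by
    intro x hx
    have h1 : deriv u =ᶠ[𝓝 x] u1 :=
      Filter.eventuallyEq_of_mem (isOpen_Ioo.mem_nhds hx) hderiv_u
    rw [h1.deriv_eq, (hdu1 x hx).deriv]
  have hmono : StrictMonoOn a (Set.Icc (0:ℝ) R) :=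
    strictMonoOn_of_deriv_pos (convex_Icc _ _) ha.continuousOn
      (by rw [interior_Icc]; exact ha'pos)
  have haPos : ∀ x ∈ Set.Ioc (0:ℝ) R, 0 < a x := by
    intro x hx
    have := hmono (left_mem_Icc.2 hR.le) ⟨hx.1.le, hx.2⟩ hx.1
    rwa [ha0] at this
  have ha1Pos : ∀ x ∈ Set.Ioo (0:ℝ) R, 0 < a1 x := by
    intro x hx; rw [← hderiv_a x hx]; exact ha'pos x hx
  -- rpow helpers
  have habs : ∀ t r : ℝ, |t| ^ r = (t ^ 2) ^ (r / 2) := by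
    intro t r
    rw [show t ^ 2 = |t| ^ 2 by rw [sq_abs], ← Real.rpow_natCast |t| 2,
      ← Real.rpow_mul (abs_nonneg t)]
    rw [show ((2:ℕ):ℝ) * (r / 2) = r by push_cast; ring]
  have hm1ne : ((m:ℝ) + 1) ≠ 0 := by positivity
  have hm6ne : (2*(m:ℝ) + 6) ≠ 0 := by positivity
  have hqval : q + 1 = (2*(m:ℝ) + 6) / ((m:ℝ) + 1) := by
    rw [hqdef]; push_cast
    rw [show ((m:ℝ) + 3 - 2) = (m:ℝ) + 1 by ring]
    field_simp
    ring
  have hqh1 : (0:ℝ) < (q + 1) / 2 := by linarith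
  have hqh2 : (0:ℝ) < (q - 1) / 2 := by linarith
  have hsplit : ∀ t : ℝ, ((t ^ 2 : ℝ)) ^ ((q + 1) / 2) = (t ^ 2) ^ ((q - 1) / 2) * t ^ 2 := by
    intro t
    rcases eq_or_ne t 0 with h | h
    · rw [h]
      rw [show ((0:ℝ) ^ 2) = 0 by norm_num, Real.zero_rpow hqh1.ne',
        Real.zero_rpow hqh2.ne']
      ring
    · have h2 : (0:ℝ) < t ^ 2 := by positivity
      rw [show (q + 1) / 2 = (q - 1) / 2 + 1 by ring, Real.rpow_add h2, Real.rpow_one]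
  -- clean form of the equation
  have heq' : ∀ x ∈ Set.Ioo (0:ℝ) R,
      u2 x = -(((m:ℝ) + 2) * (a1 x / a x)) * u1 x - lam * u x
        - (u x ^ 2) ^ ((q - 1) / 2) * u x := by
    intro x hx
    have h := heq x hx
    rw [hd2u x hx, hderiv_u x hx, hderiv_a x hx, habs (u x) (q - 1)] at h
    push_cast at h ⊢
    linear_combination -h
  -- lower bound from the GLB hypothesis
  have hGlb : ∀ x ∈ Set.Ioo (0:ℝ) R,
      lam ≤ ((m:ℝ) + 1) / 4 * (((m:ℝ) + 2) * a2 x / a x + a3 x / a1 x) := by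
    intro x hx
    have h1 := hmu.1 ⟨x, hx, rfl⟩
    rw [hd2a x hx, hd3a x hx, hderiv_a x hx] at h1
    have h2 : lam ≤ ((m:ℝ) + 1) / 4 * mu := by
      have : ((↑(m + 3) : ℝ) - 2) / 4 * mu = ((m:ℝ) + 1) / 4 * mu := by push_cast; ring
      linarith [hlam, this.symm.le, this.le]
    calc lam ≤ ((m:ℝ) + 1) / 4 * mu := h2
      _ ≤ ((m:ℝ) + 1) / 4 * (((m:ℝ) + 2) * a2 x / a x + a3 x / a1 x) := by
          apply mul_le_mul_of_nonneg_left _ (by positivity)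
          calc mu ≤ ((↑(m + 3) : ℝ) - 1) * a2 x / a x + a3 x / a1 x := h1
            _ = ((m:ℝ) + 2) * a2 x / a x + a3 x / a1 x := by push_cast; ring
  -- the Pohozaev function
  set H : ℝ → ℝ := fun y => a y ^ (m + 2) *
      (a y * (u1 y ^ 2 / 2 + lam * u y ^ 2 / 2 + (u y ^ 2) ^ ((q + 1) / 2) * (((m:ℝ) + 1) / (2*(m:ℝ) + 6)))
        + ((m:ℝ) + 1) / 2 * (a1 y * (u y * u1 y))
        - ((m:ℝ) + 1) / 4 * (a2 y * u y ^ 2)) with hHdef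
  have hHd : ∀ x ∈ Set.Ioo (0:ℝ) R, HasDerivAt H
      (a x ^ (m + 2) * a1 x * u x ^ 2 *
        (lam - ((m:ℝ) + 1) / 4 * (((m:ℝ) + 2) * a2 x / a x + a3 x / a1 x))) x := by
    intro x hx
    have Ha := hda x hx
    have Ha1 := hda1 x hx
    have Ha2 := hda2 x hx
    have Hu := hdu x hx
    have Hu1 := hdu1 x hx
    have haxne : a x ≠ 0 := (haPos x ⟨hx.1, hx.2.le⟩).ne'
    have ha1xne : a1 x ≠ 0 := (ha1Pos x hx).ne'
    have hΦ : HasDerivAt (fun y => (u y ^ 2) ^ ((q + 1) / 2))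
        (((2*(m:ℝ) + 6) / ((m:ℝ) + 1)) * ((u x ^ 2) ^ ((q - 1) / 2) * (u x * u1 x))) x := by
      have h1 : HasDerivAt (fun t : ℝ => t ^ ((q + 1) / 2))
          (((q + 1) / 2) * (u x ^ 2) ^ ((q + 1) / 2 - 1)) (u x ^ 2) :=
        Real.hasDerivAt_rpow_const (Or.inr (by linarith))
      have h2 : HasDerivAt (fun y => u y ^ 2) (2 * u x * u1 x) x := by
        exact (Hu.pow 2).congr_deriv (by simp)
      have h3 := h1.comp x h2
      refine h3.congr_deriv ?_
      rw [show (q + 1) / 2 - 1 = (q - 1) / 2 by ring,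
        show (q + 1) / 2 = ((2*(m:ℝ) + 6) / ((m:ℝ) + 1)) / 2 by rw [← hqval]]
      ring
    have hpow := Ha.pow (m + 2)
    have hfull := hpow.mul
      (((Ha.mul ((((Hu1.pow 2).div_const 2).add
          (((Hu.pow 2).const_mul lam).div_const 2)).add
            (hΦ.mul_const (((m:ℝ) + 1) / (2*(m:ℝ) + 6))))).add
        ((Ha1.mul (Hu.mul Hu1)).const_mul (((m:ℝ) + 1) / 2))).sub
        ((Ha2.mul (Hu.pow 2)).const_mul (((m:ℝ) + 1) / 4)))
    rw [hHdef]
    refine hfull.congr_deriv ?_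
    simp only [Pi.mul_apply, Pi.add_apply, Pi.sub_apply, Pi.pow_apply]
    rw [heq' x hx, hsplit (u x), show m + 2 - 1 = m + 1 from by omega]
    push_cast
    field_simp
    ring
  -- H is antitone
  have hca := ha.continuousOn
  have hca1 := ha1'.continuousOn
  have hca2 := ha2'.continuousOn
  have hcu := hu.continuousOn
  have hcu1 := hu1'.continuousOn
  have hcΦ : ContinuousOn (fun y => (u y ^ 2) ^ ((q + 1) / 2)) (Set.Icc (0:ℝ) R) :=
    (hcu.pow 2).rpow_const (fun x _ => Or.inr hqh1.le)
  have hHcont : ContinuousOn H (Set.Icc (0:ℝ) R) := by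
    rw [hHdef]
    exact (hca.pow _).mul
      (((hca.mul ((((hcu1.pow 2).div_const 2).add
          ((continuousOn_const.mul (hcu.pow 2)).div_const 2)).add
            (hcΦ.mul continuousOn_const))).add
        (continuousOn_const.mul (hca1.mul (hcu.mul hcu1)))).sub
        (continuousOn_const.mul (hca2.mul (hcu.pow 2))))
  have hAnti : AntitoneOn H (Set.Icc (0:ℝ) R) := by
    apply antitoneOn_of_deriv_nonpos (convex_Icc _ _) hHcont
    · rw [interior_Icc]
      exact fun x hx => (hHd x hx).differentiableAt.differentiableWithinAt
    · rw [interior_Icc]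
      intro x hx
      rw [(hHd x hx).deriv]
      have h1 : (0:ℝ) ≤ a x ^ (m + 2) * a1 x * u x ^ 2 :=
        mul_nonneg (mul_nonneg (pow_nonneg (haPos x ⟨hx.1, hx.2.le⟩).le _)
          (ha1Pos x hx).le) (sq_nonneg _)
      have h2 : lam - ((m:ℝ) + 1) / 4 * (((m:ℝ) + 2) * a2 x / a x + a3 x / a1 x) ≤ 0 :=
        sub_nonpos.2 (hGlb x hx)
      exact mul_nonpos_of_nonneg_of_nonpos h1 h2
  have hH0 : H 0 = 0 := by
    rw [hHdef]; simp [ha0]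
  have hHR : H R ≤ 0 := by
    have := hAnti (left_mem_Icc.2 hR.le) (right_mem_Icc.2 hR.le) hR.le
    rwa [hH0] at this
  have haR : 0 < a R := haPos R ⟨hR, le_rfl⟩
  have hu1R : u1 R = 0 := by
    have hval : H R = a R ^ (m + 2) * (a R * (u1 R ^ 2 / 2)) := by
      rw [hHdef]
      simp only [huR]
      rw [show ((0:ℝ) ^ 2) = 0 by norm_num, Real.zero_rpow hqh1.ne']
      ring
    rw [hval] at hHR
    have hsq : u1 R ^ 2 ≤ 0 := by
      have hp : (0:ℝ) < a R ^ (m + 2) * a R := by positivity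
      nlinarith [hHR, hp, sq_nonneg (u1 R)]
    have : u1 R ^ 2 = 0 := le_antisymm hsq (sq_nonneg _)
    exact (pow_eq_zero_iff two_ne_zero).mp this
  -- energy/Gronwall step: u vanishes on the interior
  obtain ⟨M, hM⟩ := isCompact_Icc.exists_bound_of_continuousOn hcu
  have hM0 : 0 ≤ M := le_trans (norm_nonneg _) (hM 0 (left_mem_Icc.2 hR.le))
  set Mq : ℝ := M ^ (q - 1) with hMqdef
  have hMq0 : 0 ≤ Mq := Real.rpow_nonneg hM0 _
  have main : ∀ ε ∈ Set.Ioo (0:ℝ) R, u ε = 0 := by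
    intro ε hε
    have hsub : Set.Icc ε R ⊆ Set.Icc (0:ℝ) R := Icc_subset_Icc hε.1.le le_rfl
    have haPos' : ∀ x ∈ Set.Icc ε R, 0 < a x :=
      fun x hx => haPos x ⟨lt_of_lt_of_le hε.1 hx.1, hx.2⟩
    have hbc : ContinuousOn (fun x => ((m:ℝ) + 2) * (a1 x / a x)) (Set.Icc ε R) :=
      continuousOn_const.mul ((hca1.mono hsub).div (hca.mono hsub)
        (fun x hx => (haPos' x hx).ne'))
    obtain ⟨B, hB⟩ := isCompact_Icc.exists_bound_of_continuousOn hbc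
    have hB0 : 0 ≤ B := le_trans (norm_nonneg _) (hB ε ⟨le_rfl, hε.2.le⟩)
    set K : ℝ := 2 * B + 2 * |lam| + 2 * Mq + 2 with hKdef
    set En : ℝ → ℝ := fun y => (u y ^ 2 + u1 y ^ 2) * Real.exp (K * y) with hEndef
    have hEncont : ContinuousOn En (Set.Icc ε R) := by
      rw [hEndef]
      exact (((hcu.mono hsub).pow 2).add ((hcu1.mono hsub).pow 2)).mul
        (Real.continuous_exp.comp (continuous_const.mul continuous_id)).continuousOn
    have hEnd : ∀ x ∈ Set.Ioo ε R, HasDerivAt En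
        ((2 * u x * u1 x + 2 * u1 x * u2 x + K * (u x ^ 2 + u1 x ^ 2)) * Real.exp (K * x)) x := by
      intro x hx
      have hx' : x ∈ Set.Ioo (0:ℝ) R := ⟨lt_trans hε.1 hx.1, hx.2⟩
      have h1 := ((hdu x hx').pow 2).add ((hdu1 x hx').pow 2)
      have hg : HasDerivAt (fun y : ℝ => K * y) K x := by
        simpa using (hasDerivAt_id x).const_mul K
      have h2 : HasDerivAt (fun y => Real.exp (K * y)) (Real.exp (K * x) * K) x := by
        have := (Real.hasDerivAt_exp (K * x)).comp x hg
        exact this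
      rw [hEndef]
      refine (h1.mul h2).congr_deriv ?_
      simp only [Pi.mul_apply, Pi.add_apply, Pi.pow_apply]
      push_cast
      ring
    have hEnmono : MonotoneOn En (Set.Icc ε R) := by
      apply monotoneOn_of_deriv_nonneg (convex_Icc _ _) hEncont
      · rw [interior_Icc]
        exact fun x hx => (hEnd x hx).differentiableAt.differentiableWithinAt
      · rw [interior_Icc]
        intro x hx
        rw [(hEnd x hx).deriv]
        have hx' : x ∈ Set.Ioo (0:ℝ) R := ⟨lt_trans hε.1 hx.1, hx.2⟩
        apply mul_nonneg _ (Real.exp_pos _).le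
        rw [heq' x hx']
        set P : ℝ := (u x ^ 2) ^ ((q - 1) / 2) with hPdef
        have hP0 : 0 ≤ P := Real.rpow_nonneg (by positivity) _
        have hPb : P ≤ Mq := by
          rw [hPdef, hMqdef, ← habs (u x) (q - 1)]
          exact Real.rpow_le_rpow (abs_nonneg _)
            (by simpa using hM x (hxD x hx')) (by linarith)
        have hbx := hB x ⟨hx.1.le, hx.2.le⟩
        rw [Real.norm_eq_abs, abs_le] at hbx
        have hb2 : ((m:ℝ) + 2) * (a1 x / a x) ≤ B := hbx.2
        have hbpos : 0 < ((m:ℝ) + 2) * (a1 x / a x) :=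
          mul_pos (by positivity) (div_pos (ha1Pos x hx') (haPos x ⟨hx'.1, hx'.2.le⟩))
        set b : ℝ := ((m:ℝ) + 2) * (a1 x / a x) with hbdef
        have hlam1 : -|lam| ≤ lam := neg_abs_le lam
        have hlam2 : lam ≤ |lam| := le_abs_self lam
        rw [hKdef]
        nlinarith [sq_nonneg (u x + u1 x), sq_nonneg (u x - u1 x), sq_nonneg (u x),
          sq_nonneg (u1 x),
          mul_nonneg hP0 (sq_nonneg (u x + u1 x)), mul_nonneg hP0 (sq_nonneg (u x - u1 x)),
          mul_nonneg (sub_nonneg.2 hPb) (by positivity : (0:ℝ) ≤ u x ^ 2 + u1 x ^ 2),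
          mul_nonneg (sub_nonneg.2 hlam2) (sq_nonneg (u x + u1 x)),
          mul_nonneg (by linarith : (0:ℝ) ≤ |lam| + lam) (sq_nonneg (u x - u1 x)),
          mul_nonneg (sub_nonneg.2 hb2) (sq_nonneg (u1 x)),
          mul_nonneg hbpos.le (sq_nonneg (u1 x))]
    have hle : En ε ≤ En R :=
      hEnmono (left_mem_Icc.2 hε.2.le) (right_mem_Icc.2 hε.2.le) hε.2.le
    have hEnR : En R = 0 := by
      rw [hEndef]; simp [huR, hu1R]
    rw [hEnR] at hle
    have hexp : 0 < Real.exp (K * ε) := Real.exp_pos _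
    have husq : u ε ^ 2 = 0 := by
      rw [hEndef] at hle
      simp only at hle
      nlinarith [sq_nonneg (u ε), sq_nonneg (u1 ε), hexp, hle]
    exact (pow_eq_zero_iff two_ne_zero).mp husq
  -- u vanishes at 0 by continuity
  have hu0 : u 0 = 0 := by
    haveI : (𝓝[Set.Ioo (0:ℝ) R] (0:ℝ)).NeBot := by
      apply mem_closure_iff_nhdsWithin_neBot.mp
      rw [closure_Ioo hR.ne]
      exact left_mem_Icc.2 hR.le
    have h1 : Tendsto u (𝓝[Set.Ioo (0:ℝ) R] 0) (𝓝 (u 0)) :=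
      ((hu.continuousOn 0 (left_mem_Icc.2 hR.le)).mono Ioo_subset_Icc_self).tendsto
    have h2 : Tendsto u (𝓝[Set.Ioo (0:ℝ) R] 0) (𝓝 0) := by
      apply Tendsto.congr' _ tendsto_const_nhds
      filter_upwards [self_mem_nhdsWithin] with y hy
      exact (main y hy).symm
    exact tendsto_nhds_unique h1 h2
  -- contradiction
  rcases eq_or_lt_of_le hx₀.1 with h0 | h0
  · exact hux₀ (h0 ▸ hu0)
  rcases eq_or_lt_of_le hx₀.2 with hRx | hRx
  · exact hux₀ (hRx ▸ huR)
  exact hux₀ (main x₀ ⟨h0, hRx⟩)
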